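/- Let n, m, d be positive integers with m ≤ n, and set k = nd and r = md. Then the number of r-element subsets A of {0, 1, ..., k-1} with f_k(A) = n is |𝒜_n(r,k)| = Σ_{s | gcd(n,m)} C(n/s, m/s) · μ(s), where the sum is over all positive divisors s of gcd(n,m), C(·,·) denotes the binomial coefficient, and μ is the Möbius function. -/

import Mathlib

open Finset

/-- The set of residues of `A` modulo `k`. -/
def resSet (k : ℕ) (A : Finset ℕ) : Finset ℕ := A.image (· % k)

/-- The set `A + t = {a + t : a ∈ A}`. -/
def shiftSet (A : Finset ℕ) (t : ℕ) : Finset ℕ := A.image (· + t)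

/-- Two finite sets of naturals are equal modulo `k` if they have the same residues mod `k`. -/
def eqMod (k : ℕ) (A B : Finset ℕ) : Prop := resSet k A = resSet k B

/-- `fk k A` is the least positive `l` with `A + l` equal to `A` modulo `k`. -/
noncomputable def fk (k : ℕ) (A : Finset ℕ) : ℕ :=
  sInf {l : ℕ | 0 < l ∧ eqMod k (shiftSet A l) A}

/-- `𝒜(j, i)`: the collection of all `j`-element subsets of `{0, 1, ..., i-1}`. -/
def Acoll (j i : ℕ) : Finset (Finset ℕ) :=
  (Finset.range i).powerset.filter (fun A => A.card = j)

open scoped Classical in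
/-- `𝒜_s(j, i)`: the members `A` of `𝒜(j, i)` with `f_i(A) = s`. -/
noncomputable def Asub (s j i : ℕ) : Finset (Finset ℕ) :=
  (Acoll j i).filter (fun A => fk i A = s)

/-- The orbit of `A` under shifting modulo `k`: the residue sets of `A + j`, `0 ≤ j < k`.
Two subsets of `{0, ..., k-1}` are `k`-equivalent iff their orbits coincide. -/
def orb (k : ℕ) (A : Finset ℕ) : Finset (Finset ℕ) :=
  (Finset.range k).image (fun j => resSet k (shiftSet A j))

/-- `|𝒫_n(r, k)|`: the number of `k`-equivalence classes of `𝒜_n(r, k)`. -/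
noncomputable def numClasses (n r k : ℕ) : ℕ := ((Asub n r k).image (orb k)).card

section Aux
variable {k s l l' : ℕ} {A : Finset ℕ}

/-- shift invariance predicate -/
def sInv (k : ℕ) (A : Finset ℕ) (l : ℕ) : Prop :=
  A.image (fun a => (a + l) % k) = A

lemma resSet_eq (hA : A ⊆ range k) : resSet k A = A := by
  unfold resSet
  have h : Set.EqOn (· % k) id (A : Set ℕ) := fun a ha => Nat.mod_eq_of_lt (mem_range.mp (hA ha))
  rw [Finset.image_congr h, Finset.image_id]

lemma eqMod_iff (hA : A ⊆ range k) (l : ℕ) :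
    eqMod k (shiftSet A l) A ↔ sInv k A l := by
  unfold eqMod sInv shiftSet
  rw [resSet_eq hA]
  unfold resSet
  rw [Finset.image_image]
  rfl

lemma image_shift_shift (k l l' : ℕ) (B : Finset ℕ) :
    (B.image (fun a => (a + l) % k)).image (fun a => (a + l') % k)
      = B.image (fun a => (a + (l + l')) % k) := by
  rw [Finset.image_image]
  apply Finset.image_congr
  intro a _
  simp only [Function.comp_apply]
  rw [Nat.mod_add_mod, add_assoc]

lemma sInv_add (h : sInv k A l) (h' : sInv k A l') : sInv k A (l + l') := by
  unfold sInv at *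
  calc A.image (fun a => (a + (l + l')) % k)
      = (A.image (fun a => (a + l) % k)).image (fun a => (a + l') % k) :=
        (image_shift_shift k l l' A).symm
    _ = A.image (fun a => (a + l') % k) := by rw [h]
    _ = A := h'

lemma sInv_cancel (h : sInv k A l) (h' : sInv k A (l + l')) : sInv k A l' := by
  unfold sInv at *
  calc A.image (fun a => (a + l') % k)
      = (A.image (fun a => (a + l) % k)).image (fun a => (a + l') % k) := by rw [h]
    _ = A.image (fun a => (a + (l + l')) % k) := image_shift_shift k l l' A
    _ = A := h'

lemma sInv_zero (hA : A ⊆ range k) : sInv k A 0 := by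
  unfold sInv
  simpa [resSet] using resSet_eq hA

lemma sInv_self (hA : A ⊆ range k) : sInv k A k := by
  unfold sInv
  have : ∀ a ∈ A, (a + k) % k = (· % k) a := by
    intro a _; simp [Nat.add_mod_right]
  rw [Finset.image_congr this]
  exact resSet_eq hA

lemma sInv_mul (hA : A ⊆ range k) (h : sInv k A l) (q : ℕ) : sInv k A (q * l) := by
  induction q with
  | zero => simpa using sInv_zero hA
  | succ q ih => have := sInv_add ih h; rwa [show q * l + l = (q+1) * l by ring] at this

lemma fk_spec (hA : A ⊆ range k) (hk : 0 < k) :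
    0 < fk k A ∧ sInv k A (fk k A) := by
  have hne : {l : ℕ | 0 < l ∧ eqMod k (shiftSet A l) A}.Nonempty :=
    ⟨k, hk, (eqMod_iff hA k).mpr (sInv_self hA)⟩
  obtain ⟨h1, h2⟩ := Nat.sInf_mem hne
  exact ⟨h1, (eqMod_iff hA _).mp h2⟩

lemma fk_dvd_iff (hA : A ⊆ range k) (hk : 0 < k) (hs : 0 < s) :
    fk k A ∣ s ↔ sInv k A s := by
  obtain ⟨hfpos, hfinv⟩ := fk_spec hA hk
  constructor
  · rintro ⟨q, hq⟩
    rw [hq, mul_comm]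
    exact sInv_mul hA hfinv q
  · intro hsinv
    set f := fk k A with hf
    have hdm : f * (s / f) + s % f = s := Nat.div_add_mod s f
    have h1 : sInv k A (f * (s / f)) := by
      have := sInv_mul hA hfinv (s / f); rwa [mul_comm] at this
    have h2 : sInv k A (s % f) := sInv_cancel h1 (by rwa [hdm])
    rcases Nat.eq_zero_or_pos (s % f) with h0 | hpos
    · exact Nat.dvd_of_mod_eq_zero h0
    · exfalso
      have hle : f ≤ s % f :=
        Nat.sInf_le ⟨hpos, (eqMod_iff hA _).mpr h2⟩
      exact absurd (Nat.mod_lt s hfpos) (not_lt.mpr hle)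


lemma shift_inj {k s a b : ℕ} (ha : a < k) (hb : b < k)
    (h : (a + s) % k = (b + s) % k) : a = b := by
  have h2 : a % k = b % k := Nat.ModEq.add_right_cancel' s h
  rwa [Nat.mod_eq_of_lt ha, Nat.mod_eq_of_lt hb] at h2

lemma mem_step (hA : A ⊆ range k) (h : sInv k A s) {a : ℕ} (ha : a < k) :
    a ∈ A ↔ (a + s) % k ∈ A := by
  constructor
  · intro haA
    rw [← h]
    exact mem_image_of_mem _ haA
  · intro hmem
    rw [← h] at hmem
    obtain ⟨b, hb, hbe⟩ := mem_image.mp hmem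
    have : b = a := shift_inj (mem_range.mp (hA hb)) ha hbe
    rwa [← this]

lemma mem_iter (hA : A ⊆ range k) (h : sInv k A s) :
    ∀ j a, a < k → (a ∈ A ↔ (a + j * s) % k ∈ A) := by
  intro j
  induction j with
  | zero => intro a ha; simp [Nat.mod_eq_of_lt ha]
  | succ j ih =>
    intro a ha
    have hk : 0 < k := Nat.lt_of_le_of_lt (Nat.zero_le a) ha
    rw [mem_step hA h ha, ih ((a + s) % k) (Nat.mod_lt _ hk)]
    have he : ((a + s) % k + j * s) % k = (a + (j + 1) * s) % k := by
      rw [Nat.mod_add_mod]; congr 1; ring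
    rw [he]

lemma mem_mod (hA : A ⊆ range k) (h : sInv k A s) {a : ℕ} (ha : a < k) :
    a ∈ A ↔ a % s ∈ A := by
  have h2 := mem_iter hA h (a / s) (a % s) (Nat.lt_of_le_of_lt (Nat.mod_le a s) ha)
  rwa [Nat.mod_add_div', Nat.mod_eq_of_lt ha, Iff.comm] at h2

lemma sInv_of_mod (hA : A ⊆ range k) (hsk : s ∣ k)
    (hmod : ∀ a < k, (a ∈ A ↔ a % s ∈ A)) : sInv k A s := by
  have hsub : A.image (fun a => (a + s) % k) ⊆ A := by
    intro x hx
    obtain ⟨a, haA, rfl⟩ := mem_image.mp hx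
    have hak : a < k := mem_range.mp (hA haA)
    have hk : 0 < k := Nat.lt_of_le_of_lt (Nat.zero_le a) hak
    have hmods : (a + s) % k % s = a % s := by
      rw [Nat.mod_mod_of_dvd _ hsk, Nat.add_mod_right]
    rw [hmod _ (Nat.mod_lt _ hk), hmods, ← hmod a hak]
    exact haA
  have hcard : (A.image (fun a => (a + s) % k)).card = A.card := by
    apply Finset.card_image_of_injOn
    intro a haA b hbA hab
    exact shift_inj (mem_range.mp (hA haA)) (mem_range.mp (hA hbA)) hab
  exact Finset.eq_of_subset_of_card_le hsub (le_of_eq hcard.symm)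

end Aux

section Count
open scoped Classical
variable {k s r : ℕ} {A B : Finset ℕ}

lemma card_psi (hsk : s ∣ k) (hs : 0 < s) (hB : B ⊆ range s) :
    ((range k).filter (fun x => x % s ∈ B)).card = B.card * (k / s) := by
  have hset : (range k).filter (fun x => x % s ∈ B)
      = (B ×ˢ range (k / s)).image (fun p => p.1 + p.2 * s) := by
    ext x
    simp only [mem_filter, mem_range, mem_image, mem_product]
    constructor
    · rintro ⟨hx, hxB⟩
      exact ⟨(x % s, x / s), ⟨hxB, Nat.div_lt_div_of_lt_of_dvd hsk hx⟩, Nat.mod_add_div' x s⟩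
    · rintro ⟨⟨b, j⟩, ⟨hb, hj⟩, rfl⟩
      have hbs : b < s := mem_range.mp (hB hb)
      refine ⟨?_, ?_⟩
      · calc b + j * s < s + j * s := by omega
          _ = (j + 1) * s := by ring
          _ ≤ (k / s) * s := Nat.mul_le_mul_right _ hj
          _ = k := Nat.div_mul_cancel hsk
      · simpa [Nat.add_mul_mod_self_right, Nat.mod_eq_of_lt hbs] using hb
  rw [hset, Finset.card_image_of_injOn, Finset.card_product, Finset.card_range]
  rintro ⟨b, j⟩ hbj ⟨b', j'⟩ hbj' hE
  simp only [coe_product, Set.mem_prod, mem_coe, mem_range] at hbj hbj'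
  have hb : b < s := mem_range.mp (hB hbj.1)
  have hb' : b' < s := mem_range.mp (hB hbj'.1)
  simp only at hE
  have h1 : b = b' := by
    have h3 := congrArg (· % s) hE
    simpa [Nat.add_mul_mod_self_right, Nat.mod_eq_of_lt hb, Nat.mod_eq_of_lt hb'] using h3
  have h2 : j = j' := by
    subst h1
    exact Nat.eq_of_mul_eq_mul_right hs (by omega)
  simp [h1, h2]

lemma inv_eq_psi (hA : A ⊆ range k) (hinv : sInv k A s) (hs : 0 < s) :
    A = (range k).filter (fun x => x % s ∈ A.filter (· < s)) := by
  ext x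
  simp only [mem_filter, mem_range]
  constructor
  · intro hx
    have hxk : x < k := mem_range.mp (hA hx)
    refine ⟨hxk, ?_, Nat.mod_lt _ hs⟩
    exact (mem_mod hA hinv hxk).mp hx
  · rintro ⟨hxk, hxs, -⟩
    exact (mem_mod hA hinv hxk).mpr hxs

lemma card_inv_filter (hk : 0 < k) (hs : 0 < s) (hsk : s ∣ k) :
    ((Acoll r k).filter (fun A => fk k A ∣ s)).card
      = ((range s).powerset.filter (fun B => B.card * (k / s) = r)).card := by
  have hslek : s ≤ k := Nat.le_of_dvd hk hsk
  apply Finset.card_bij' (i := fun A _ => A.filter (· < s))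
    (j := fun B _ => (range k).filter (fun x => x % s ∈ B))
  · -- hi
    intro A hA
    simp only [Acoll, mem_filter, mem_powerset] at hA
    obtain ⟨⟨hAr, hAc⟩, hfd⟩ := hA
    have hinv : sInv k A s := (fk_dvd_iff hAr hk hs).mp hfd
    simp only [mem_filter, mem_powerset]
    constructor
    · intro x hx
      simp only [mem_filter] at hx
      exact mem_range.mpr hx.2
    · have := card_psi hsk hs (B := A.filter (· < s))
        (fun x hx => mem_range.mpr (mem_filter.mp hx).2)
      rw [← inv_eq_psi hAr hinv hs] at this
      omega
  · -- hj
    intro B hB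
    simp only [mem_filter, mem_powerset] at hB
    obtain ⟨hBr, hBc⟩ := hB
    simp only [Acoll, mem_filter, mem_powerset]
    have hψr : (range k).filter (fun x => x % s ∈ B) ⊆ range k := filter_subset _ _
    refine ⟨⟨hψr, ?_⟩, ?_⟩
    · rw [card_psi hsk hs hBr]; exact hBc
    · rw [fk_dvd_iff hψr hk hs]
      apply sInv_of_mod hψr hsk
      intro a ha
      simp only [mem_filter, mem_range]
      have h1 : a % s % s = a % s := Nat.mod_eq_of_lt (Nat.mod_lt _ hs)
      have h2 : a % s < k := Nat.lt_of_lt_of_le (Nat.mod_lt _ hs) hslek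
      constructor
      · rintro ⟨-, h⟩; exact ⟨h2, by rwa [h1]⟩
      · rintro ⟨-, h⟩; rw [h1] at h; exact ⟨ha, h⟩
  · -- left inv
    intro A hA
    simp only [Acoll, mem_filter, mem_powerset] at hA
    obtain ⟨⟨hAr, hAc⟩, hfd⟩ := hA
    exact (inv_eq_psi hAr ((fk_dvd_iff hAr hk hs).mp hfd) hs).symm
  · -- right inv
    intro B hB
    simp only [mem_filter, mem_powerset] at hB
    obtain ⟨hBr, hBc⟩ := hB
    ext x
    simp only [mem_filter, mem_range]
    constructor
    · rintro ⟨⟨-, hxB⟩, hxs⟩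
      rwa [Nat.mod_eq_of_lt hxs] at hxB
    · intro hx
      have hxs : x < s := mem_range.mp (hBr hx)
      exact ⟨⟨Nat.lt_of_lt_of_le hxs hslek, by rwa [Nat.mod_eq_of_lt hxs]⟩, hxs⟩

lemma card_powerset_filter (s r c : ℕ) (hc : 0 < c) :
    ((range s).powerset.filter (fun B => B.card * c = r)).card
      = if c ∣ r then s.choose (r / c) else 0 := by
  split_ifs with h
  · have he : (range s).powerset.filter (fun B => B.card * c = r)
        = (range s).powerset.filter (fun B => B.card = r / c) := by
      apply Finset.filter_congr
      intro B _
      constructor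
      · rintro rfl; rw [Nat.mul_div_cancel _ hc]
      · intro hb; rw [hb]; exact Nat.div_mul_cancel h
    rw [he, ← Finset.powersetCard_eq_filter, Finset.card_powersetCard, Finset.card_range]
  · rw [Finset.card_eq_zero, Finset.filter_eq_empty_iff]
    intro B _
    exact fun hBc => h ⟨B.card, by rw [← hBc, mul_comm]⟩

lemma sum_Asub (r k : ℕ) (hs : 0 < s) :
    ∑ t ∈ s.divisors, (Asub t r k).card
      = ((Acoll r k).filter (fun A => fk k A ∣ s)).card := by
  rw [Finset.card_eq_sum_card_fiberwise (f := fk k) (t := s.divisors)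
    (fun A hA => Nat.mem_divisors.mpr ⟨(mem_filter.mp hA).2, hs.ne'⟩)]
  apply Finset.sum_congr rfl
  intro t ht
  have htd : t ∣ s := (Nat.mem_divisors.mp ht).1
  congr 1
  ext A
  simp only [Asub, mem_filter]
  constructor
  · rintro ⟨hA, hfk⟩; exact ⟨⟨hA, hfk ▸ htd⟩, hfk⟩
  · rintro ⟨⟨hA, -⟩, hfk⟩; exact ⟨hA, hfk⟩

end Count

/-- for `k = n * d`, `r = m * d`, the number of `r`-element subsets `A` of
`{0, ..., k-1}` with `f_k(A) = n` equals `∑_{s ∣ gcd(n, m)} C(n/s, m/s) * μ(s)`. -/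
theorem card_Asub (n m d : ℕ) (hn : 0 < n) (hm : 0 < m) (hd : 0 < d) (hmn : m ≤ n) :
    ((Asub n (m * d) (n * d)).card : ℤ) =
      ∑ s ∈ (Nat.gcd n m).divisors,
        ((n / s).choose (m / s) : ℤ) * ArithmeticFunction.moebius s := by
  classical
  have hk : 0 < n * d := Nat.mul_pos hn hd
  have key := (ArithmeticFunction.sum_eq_iff_sum_mul_moebius_eq_on (R := ℤ)
      (f := fun t => ((Asub t (m * d) (n * d)).card : ℤ))
      (g := fun s => (((Acoll (m * d) (n * d)).filter (fun A => fk (n * d) A ∣ s)).card : ℤ))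
      {x | x ∣ n} (fun a b hab hb => hab.trans hb)).mp
      (fun s hs _ => by exact_mod_cast sum_Asub (m * d) (n * d) hs) n hn (dvd_refl n)
  have hg : ∀ u ∈ n.divisors,
      (((Acoll (m * d) (n * d)).filter (fun A => fk (n * d) A ∣ n / u)).card : ℤ)
        = if u ∣ m then ((n / u).choose (m / u) : ℤ) else 0 := by
    intro u hu
    obtain ⟨hun, hn0⟩ := Nat.mem_divisors.mp hu
    have hu0 : 0 < u := Nat.pos_of_dvd_of_pos hun hn
    have hs0 : 0 < n / u := Nat.div_pos (Nat.le_of_dvd hn hun) hu0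
    have hsk : n / u ∣ n * d := (Nat.div_dvd_of_dvd hun).trans (Dvd.intro d rfl)
    have hq : (n * d) / (n / u) = u * d := by
      have h1 : (n / u) * (u * d) = n * d := by
        rw [← mul_assoc, Nat.div_mul_cancel hun]
      rw [← h1, Nat.mul_div_cancel_left _ hs0]
    have hnat : ((Acoll (m * d) (n * d)).filter (fun A => fk (n * d) A ∣ n / u)).card
        = if u ∣ m then (n / u).choose (m / u) else 0 := by
      rw [card_inv_filter hk hs0 hsk, hq,
        card_powerset_filter _ _ _ (Nat.mul_pos hu0 hd)]
      simp only [Nat.mul_dvd_mul_iff_right hd, Nat.mul_div_mul_right m u hd]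
    rw [hnat]
    split_ifs <;> simp
  have hdivs : (Nat.gcd n m).divisors = n.divisors.filter (· ∣ m) := by
    ext x
    simp only [Nat.mem_divisors, Finset.mem_filter, Nat.dvd_gcd_iff]
    have h1 : Nat.gcd n m ≠ 0 := Nat.gcd_ne_zero_left hn.ne'
    have h2 : n ≠ 0 := hn.ne'
    tauto
  rw [← key, Nat.sum_divisorsAntidiagonal
    (fun a b => ((Int.cast (ArithmeticFunction.moebius a) : ℤ) *
      (((Acoll (m * d) (n * d)).filter (fun A => fk (n * d) A ∣ b)).card : ℤ)))]
  rw [hdivs, Finset.sum_filter]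
  apply Finset.sum_congr rfl
  intro u hu
  rw [hg u hu, mul_ite, mul_zero]
  split_ifs
  · push_cast; ring
  · rfl
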